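/- Under the definitions of the SWG element matrices: for boundary data vectors X_u = (u_{b,1},...,u_{b,N})ᵀ and X_v, with D = (MᵀEM)^{-1}MᵀE and ζ_i(x,y) = d_{1,i} + d_{2,i}(x − x_T) + d_{3,i}(y − y_T), the convection bilinear form satisfies b_T(u_b, v_b) = (β·∇_w u_b, s(v_b))_T = X_vᵀ R X_u where R = {r_{ij}} with r_{ij} = (|e_j|/|T|) ∫_T β·n_j ζ_i dT. -/

import Mathlib

open Matrix MeasureTheory

/-- dot product on ℝ² -/
noncomputable def dot2 (a b : ℝ × ℝ) : ℝ := a.1 * b.1 + a.2 * b.2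

/-- The convection element matrix: with `D = (MᵀEM)⁻¹MᵀE`,
`ζ_i(x,y) = d_{1,i} + d_{2,i}(x − x_T) + d_{3,i}(y − y_T)`,
`∇_w u_b = (1/|T|) Σ_j u_{b,j}|e_j| n_j`, and `s(v_b) = Σ_i v_i ζ_i`, the
convection bilinear form satisfies
`b_T(u_b,v_b) = (β·∇_w u_b, s(v_b))_T = X_vᵀ R X_u` where
`r_{ij} = (|e_j|/|T|) ∫_T β·n_j ζ_i dT`. -/
theorem stmt15 (N : ℕ) (T : Set (ℝ × ℝ)) (areaT : ℝ) (hT : 0 < areaT)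
    (len : Fin N → ℝ) (hlen : ∀ i, 0 < len i)
    (n : Fin N → ℝ × ℝ) (β : ℝ × ℝ → ℝ × ℝ) (xT yT : ℝ)
    (Mm : Matrix (Fin N) (Fin 3) ℝ) (E : Matrix (Fin N) (Fin N) ℝ)
    (D : Matrix (Fin 3) (Fin N) ℝ) (hD : D = (Mmᵀ * E * Mm)⁻¹ * Mmᵀ * E)
    (ζ : Fin N → ℝ × ℝ → ℝ)
    (hζ : ∀ i (x : ℝ × ℝ), ζ i x = D 0 i + D 1 i * (x.1 - xT) + D 2 i * (x.2 - yT))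
    (u v : Fin N → ℝ)
    (wgu : ℝ × ℝ) (hwgu : wgu = areaT⁻¹ • ∑ j, u j • (len j • n j))
    (sv : ℝ × ℝ → ℝ) (hsv : ∀ x, sv x = ∑ i, v i * ζ i x)
    (hint : ∀ i j, IntegrableOn (fun x => dot2 (β x) (n j) * ζ i x) T)
    (R : Matrix (Fin N) (Fin N) ℝ)
    (hR : ∀ i j, R i j = (len j / areaT) * ∫ x in T, dot2 (β x) (n j) * ζ i x) :
    ∫ x in T, dot2 (β x) wgu * sv x = ∑ i, ∑ j, v i * R i j * u j := by
  have hdot : ∀ x : ℝ × ℝ, dot2 (β x) wgu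
      = ∑ j, areaT⁻¹ * u j * len j * dot2 (β x) (n j) := by
    intro x
    subst hwgu
    simp only [dot2, Prod.fst_sum, Prod.snd_sum, Prod.smul_fst, Prod.smul_snd,
      smul_eq_mul, Finset.mul_sum, ← Finset.sum_add_distrib]
    exact Finset.sum_congr rfl fun j _ => by ring
  have key : ∀ x : ℝ × ℝ, dot2 (β x) wgu * sv x
      = ∑ i, ∑ j, (v i * (areaT⁻¹ * u j * len j)) * (dot2 (β x) (n j) * ζ i x) := by
    intro x
    rw [hdot, hsv, Finset.sum_mul_sum]
    rw [Finset.sum_comm]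
    exact Finset.sum_congr rfl fun i _ => Finset.sum_congr rfl fun j _ => by ring
  have h1 : (∫ x in T, dot2 (β x) wgu * sv x)
      = ∫ x in T, ∑ i, ∑ j, (v i * (areaT⁻¹ * u j * len j)) * (dot2 (β x) (n j) * ζ i x) := by
    exact integral_congr_ae (Filter.Eventually.of_forall fun x => key x)
  rw [h1, integral_finset_sum]
  · refine Finset.sum_congr rfl fun i _ => ?_
    rw [integral_finset_sum]
    · refine Finset.sum_congr rfl fun j _ => ?_
      rw [integral_const_mul, hR i j]
      field_simp
    · exact fun j _ => ((hint i j).const_mul _)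
  · exact fun i _ => integrable_finset_sum _ fun j _ => ((hint i j).const_mul _)
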